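/- Let T = (t_{i_1 … i_k}) be an order-k, dimension-n tensor with k ≥ 2 whose entries are nonnegative real numbers. Then every eigenvalue λ of T satisfies |λ| ≤ max_{1 ≤ i ≤ n} R_i(T), where R_i(T) = ∑_{i_2,…,i_k=1}^n t_{i i_2 … i_k} is the i-th row sum of T. -/

import Mathlib

open Finset

/-- A complex number `lam` is an *eigenvalue* of the order-`k`, dimension-`n` tensor `T`
(whose entry `t_{i i₂ … i_k}` is represented as `T i f` with `f = (i₂, …, i_k)`)
if there is a nonzero vector `x : Fin n → ℂ` with
`∑_{i₂,…,i_k} t_{i i₂ … i_k} x_{i₂} ⋯ x_{i_k} = lam · x_i^{k−1}` for every `i`. -/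
def IsTensorEigenvalue (n k : ℕ) (T : Fin n → (Fin (k - 1) → Fin n) → ℂ) (lam : ℂ) : Prop :=
  ∃ x : Fin n → ℂ, x ≠ 0 ∧ ∀ i : Fin n,
    ∑ f : Fin (k - 1) → Fin n, T i f * ∏ j, x (f j) = lam * x i ^ (k - 1)

/-- **Lemma 2.1.**  Every eigenvalue of a nonnegative tensor of order `k ≥ 2` and
dimension `n` is bounded in modulus by the maximum row sum
`max_{1 ≤ i ≤ n} R_i(T)`, where `R_i(T) = ∑_{i₂,…,i_k} t_{i i₂ … i_k}`. -/
theorem eigenvalue_abs_le_max_row_sum (n k : ℕ) (hk : 2 ≤ k) (hn : 1 ≤ n)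
    (T : Fin n → (Fin (k - 1) → Fin n) → ℝ) (hT : ∀ i f, 0 ≤ T i f)
    (lam : ℂ) (hlam : IsTensorEigenvalue n k (fun i f => ((T i f : ℝ) : ℂ)) lam) :
    ‖lam‖ ≤
      Finset.univ.sup' ⟨⟨0, by omega⟩, Finset.mem_univ _⟩
        (fun i : Fin n => ∑ f : Fin (k - 1) → Fin n, T i f) := by
  obtain ⟨x, hx0, hx⟩ := hlam
  obtain ⟨i₀, -, hmax⟩ := Finset.exists_max_image Finset.univ
    (fun i => ‖x i‖) ⟨⟨0, by omega⟩, Finset.mem_univ _⟩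
  have hm : 0 < ‖x i₀‖ := by
    rcases Function.ne_iff.mp hx0 with ⟨j, hj⟩
    calc (0 : ℝ) < ‖x j‖ := by simpa using hj
      _ ≤ _ := hmax j (mem_univ _)
  have key := hx i₀
  have h1 : ‖lam‖ * ‖x i₀‖ ^ (k - 1)
      ≤ (∑ f : Fin (k - 1) → Fin n, T i₀ f) * ‖x i₀‖ ^ (k - 1) := by
    calc ‖lam‖ * ‖x i₀‖ ^ (k - 1)
        = ‖lam * x i₀ ^ (k - 1)‖ := by rw [norm_mul, norm_pow]
      _ = ‖∑ f : Fin (k - 1) → Fin n, ((T i₀ f : ℝ) : ℂ) * ∏ j, x (f j)‖ := by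
          rw [key]
      _ ≤ ∑ f : Fin (k - 1) → Fin n, ‖((T i₀ f : ℝ) : ℂ) * ∏ j, x (f j)‖ :=
          norm_sum_le _ _
      _ ≤ ∑ f : Fin (k - 1) → Fin n, T i₀ f * ‖x i₀‖ ^ (k - 1) := by
          apply Finset.sum_le_sum
          intro f _
          rw [norm_mul, Complex.norm_real, Real.norm_eq_abs, abs_of_nonneg (hT _ _), norm_prod]
          apply mul_le_mul_of_nonneg_left _ (hT _ _)
          calc (∏ j, ‖x (f j)‖) ≤ ∏ _j : Fin (k - 1), ‖x i₀‖ :=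
                Finset.prod_le_prod (fun j _ => (norm_nonneg _))
                  (fun j _ => hmax (f j) (mem_univ _))
            _ = ‖x i₀‖ ^ (k - 1) := by
                rw [Finset.prod_const, Finset.card_univ, Fintype.card_fin]
      _ = (∑ f : Fin (k - 1) → Fin n, T i₀ f) * ‖x i₀‖ ^ (k - 1) := by
          rw [Finset.sum_mul]
  have h2 : ‖lam‖ ≤ ∑ f : Fin (k - 1) → Fin n, T i₀ f :=
    le_of_mul_le_mul_right h1 (pow_pos hm _)
  exact h2.trans (Finset.le_sup' (fun i : Fin n => ∑ f : Fin (k - 1) → Fin n, T i f) (mem_univ i₀))
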